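/- arXiv:1208.4221 — 2 statements merged into one kernel-verified Lean document; each statement's English description precedes it below -/
import Mathlib

section
/- The matrix d conjugates f₁ and f₂ into the group generated by f₁ and f₂: specifically d⁻¹f₁d and d⁻¹f₂d are again products of powers of f₁ and f₂ (d normalizes ⟨f₁,f₂⟩ ≅ 5²). -/
noncomputable section
open Matrix

def z : ℂ := Complex.exp (2 * Real.pi * Complex.I / 5)

/-- The diagonal matrix `f₁`. -/
def f1 : Matrix (Fin 27) (Fin 27) ℂ := Matrix.diagonal
  ![1,1,1, z,z^2,z^3,z^4, 1,1,1,1, z^3,z,z^4,z^2, z^3,z,z^4,z^2, z,z^2,z^3,z^4, z^2,z^4,z,z^3]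

/-- The diagonal matrix `f₂`. -/
def f2 : Matrix (Fin 27) (Fin 27) ℂ := Matrix.diagonal
  ![1,1,1, z^4,z^3,z^2,z, z^4,z^3,z^2,z, z^3,z,z^4,z^2, z,z^2,z^3,z^4, z^3,z,z^4,z^2, 1,1,1,1]

def I4 : Matrix (Fin 4) (Fin 4) ℂ := 1
def J4 : Matrix (Fin 4) (Fin 4) ℂ := !![0,0,0,1; 0,0,1,0; 0,1,0,0; 1,0,0,0]
def K4 : Matrix (Fin 4) (Fin 4) ℂ := !![0,1,0,0; 0,0,0,1; 1,0,0,0; 0,0,1,0]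
def L4 : Matrix (Fin 4) (Fin 4) ℂ := !![0,0,1,0; 1,0,0,0; 0,0,0,1; 0,1,0,0]

/-- The 27×27 block-permutation matrix `ac`: the 3-cycle (1 2 3) on the first
three coordinates, and `K` applied to the six 4-dimensional blocks permuted
by a 6-cycle. -/
def ac : Matrix (Fin 27) (Fin 27) ℂ := Matrix.of fun i j =>
  if (i : ℕ) < 3 ∧ (j : ℕ) < 3 then (if (j : ℕ) % 3 = ((i : ℕ) + 1) % 3 then 1 else 0)
  else if 3 ≤ (i : ℕ) ∧ 3 ≤ (j : ℕ) then
    (if ((j : ℕ) - 3) / 4 = (((i : ℕ) - 3) / 4 + 4) % 6 then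
      K4 ⟨((i : ℕ) - 3) % 4, by omega⟩ ⟨((j : ℕ) - 3) % 4, by omega⟩ else 0)
  else 0

/-- The 4×4 block in block-position `(r, c)` of the matrix `d`. -/
def dblock : ℕ → ℕ → Matrix (Fin 4) (Fin 4) ℂ := fun r c =>
  if r = 0 ∧ c = 0 then -1
  else if r = 1 ∧ c = 1 then -J4
  else if r = 2 ∧ c = 3 then (-Complex.I) • I4
  else if r = 3 ∧ c = 2 then Complex.I • I4
  else if r = 4 ∧ c = 5 then Complex.I • L4
  else if r = 5 ∧ c = 4 then (-Complex.I) • K4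
  else 0

/-- The 27×27 matrix `d`. -/
def d : Matrix (Fin 27) (Fin 27) ℂ := Matrix.of fun i j =>
  if (i : ℕ) < 3 ∨ (j : ℕ) < 3 then
    (if i = j then (if (i : ℕ) = 0 then 1 else -1) else 0)
  else
    dblock (((i : ℕ) - 3) / 4) (((j : ℕ) - 3) / 4)
      ⟨((i : ℕ) - 3) % 4, by omega⟩ ⟨((j : ℕ) - 3) % 4, by omega⟩


/-! Auxiliary development: encode all matrix entries as elements of
`Option (ZMod 20)` (either `0` or a 20th root of unity `ζ^k`), prove the
needed identities there by `decide`, and transport them to `ℂ` along the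
multiplicative decoding map `ψ`. -/

abbrev MM := Option (ZMod 20)

/-- Multiplication of coded scalars: `0` is absorbing, roots of unity multiply
by adding exponents. -/
def mmul : MM → MM → MM := fun a b => a.bind fun x => b.map fun y => x + y

/-- A primitive 20th root of unity. -/
def ζ : ℂ := Complex.exp (2 * Real.pi * Complex.I / 20)

/-- Decoding map. -/
def ψ : MM → ℂ := fun m => m.elim 0 fun k => ζ ^ k.val

lemma ζ_pow_20 : ζ ^ 20 = 1 := by
  rw [ζ, ← Complex.exp_nat_mul,
    show ((20 : ℕ) : ℂ) * (2 * Real.pi * Complex.I / 20) = 2 * Real.pi * Complex.I by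
      push_cast; ring]
  exact Complex.exp_two_pi_mul_I

lemma ζ_mod (n : ℕ) : ζ ^ (n % 20) = ζ ^ n := by
  conv_rhs => rw [← Nat.div_add_mod n 20, pow_add, pow_mul, ζ_pow_20, one_pow, one_mul]

lemma ψ_none : ψ none = 0 := rfl

lemma ψ_mmul (a b : MM) : ψ (mmul a b) = ψ a * ψ b := by
  cases a with
  | none => simp [ψ, mmul]
  | some x =>
    cases b with
    | none => simp [ψ, mmul]
    | some y =>
      show ζ ^ (x + y).val = ζ ^ x.val * ζ ^ y.val
      rw [ZMod.val_add, ζ_mod, pow_add]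

lemma hζ5 : ζ ^ 5 = Complex.I := by
  rw [ζ, ← Complex.exp_nat_mul,
    show ((5 : ℕ) : ℂ) * (2 * Real.pi * Complex.I / 20) = (↑(Real.pi / 2)) * Complex.I by
      push_cast; ring]
  rw [Complex.exp_mul_I, ← Complex.ofReal_cos, ← Complex.ofReal_sin,
    Real.cos_pi_div_two, Real.sin_pi_div_two]
  simp

lemma hζ10 : ζ ^ 10 = -1 := by
  rw [show (10 : ℕ) = 5 * 2 from rfl, pow_mul, hζ5, Complex.I_sq]

lemma hζ4 : ζ ^ 4 = z := by
  rw [ζ, z, ← Complex.exp_nat_mul]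
  congr 1
  push_cast
  ring

lemma hψ0 : ψ (some 0) = 1 := by
  show ζ ^ (0 : ZMod 20).val = 1
  norm_num [show (0 : ZMod 20).val = 0 from rfl]

lemma hψ4 : ψ (some 4) = z := by
  show ζ ^ (4 : ZMod 20).val = z
  norm_num [show (4 : ZMod 20).val = 4 from rfl, hζ4]

lemma hψ8 : ψ (some 8) = z ^ 2 := by
  show ζ ^ (8 : ZMod 20).val = z ^ 2
  rw [show (8 : ZMod 20).val = 8 from rfl, ← hζ4, ← pow_mul]

lemma hψ12 : ψ (some 12) = z ^ 3 := by
  show ζ ^ (12 : ZMod 20).val = z ^ 3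
  rw [show (12 : ZMod 20).val = 12 from rfl, ← hζ4, ← pow_mul]

lemma hψ16 : ψ (some 16) = z ^ 4 := by
  show ζ ^ (16 : ZMod 20).val = z ^ 4
  rw [show (16 : ZMod 20).val = 16 from rfl, ← hζ4, ← pow_mul]

lemma hψ5 : ψ (some 5) = Complex.I := by
  show ζ ^ (5 : ZMod 20).val = Complex.I
  rw [show (5 : ZMod 20).val = 5 from rfl, hζ5]

lemma hψ10 : ψ (some 10) = -1 := by
  show ζ ^ (10 : ZMod 20).val = -1
  rw [show (10 : ZMod 20).val = 10 from rfl, hζ10]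

lemma hψ15 : ψ (some 15) = -Complex.I := by
  show ζ ^ (15 : ZMod 20).val = -Complex.I
  rw [show (15 : ZMod 20).val = 15 from rfl, show (15 : ℕ) = 10 + 5 from rfl, pow_add,
    hζ10, hζ5]
  ring

/-- Coded diagonal of `f1`. -/
def v1M : Fin 27 → MM := ![some 0, some 0, some 0, some 4, some 8, some 12, some 16, some 0, some 0, some 0, some 0, some 12, some 4, some 16, some 8, some 12, some 4, some 16, some 8, some 4, some 8, some 12, some 16, some 8, some 16, some 4, some 12]

/-- Coded diagonal of `f2`. -/
def v2M : Fin 27 → MM := ![some 0, some 0, some 0, some 16, some 12, some 8, some 4, some 16, some 12, some 8, some 4, some 12, some 4, some 16, some 8, some 4, some 8, some 12, some 16, some 12, some 4, some 16, some 8, some 0, some 0, some 0, some 0]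

/-- Coded diagonal of `f1 ^ 3 * f2 ^ 4`. -/
def wM : Fin 27 → MM := ![some 0, some 0, some 0, some 16, some 12, some 8, some 4, some 4, some 8, some 12, some 16, some 4, some 8, some 12, some 16, some 12, some 4, some 16, some 8, some 0, some 0, some 0, some 0, some 4, some 8, some 12, some 16]

def B0 : Matrix (Fin 4) (Fin 4) MM := Matrix.of fun a b => if a = b then some 10 else none
def B1 : Matrix (Fin 4) (Fin 4) MM := !![none, none, none, some 10; none, none, some 10, none; none, some 10, none, none; some 10, none, none, none]
def B2 : Matrix (Fin 4) (Fin 4) MM := Matrix.of fun a b => if a = b then some 15 else none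
def B3 : Matrix (Fin 4) (Fin 4) MM := Matrix.of fun a b => if a = b then some 5 else none
def B4 : Matrix (Fin 4) (Fin 4) MM := !![none, none, some 5, none; some 5, none, none, none; none, none, none, some 5; none, some 5, none, none]
def B5 : Matrix (Fin 4) (Fin 4) MM := !![none, some 15, none, none; none, none, none, some 15; some 15, none, none, none; none, none, some 15, none]

/-- Coded version of `dblock`. -/
def dblockM : ℕ → ℕ → Matrix (Fin 4) (Fin 4) MM := fun r c =>
  if r = 0 ∧ c = 0 then B0
  else if r = 1 ∧ c = 1 then B1
  else if r = 2 ∧ c = 3 then B2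
  else if r = 3 ∧ c = 2 then B3
  else if r = 4 ∧ c = 5 then B4
  else if r = 5 ∧ c = 4 then B5
  else fun _ _ => none

/-- Coded version of `d`. -/
def DM : Matrix (Fin 27) (Fin 27) MM := Matrix.of fun i j =>
  if (i : ℕ) < 3 ∨ (j : ℕ) < 3 then
    (if i = j then (if (i : ℕ) = 0 then some 0 else some 10) else none)
  else
    dblockM (((i : ℕ) - 3) / 4) (((j : ℕ) - 3) / 4)
      ⟨((i : ℕ) - 3) % 4, by omega⟩ ⟨((j : ℕ) - 3) % 4, by omega⟩

/-- The permutation underlying `d` (position of the unique nonzero entry in each row). -/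
def κf : Fin 27 → Fin 27 := ![0, 1, 2, 3, 4, 5, 6, 10, 9, 8, 7, 15, 16, 17, 18, 11, 12, 13, 14, 25, 23, 26, 24, 20, 22, 19, 21]

lemma hB0 : ∀ a b : Fin 4, (-1 : Matrix (Fin 4) (Fin 4) ℂ) a b = ψ (B0 a b) := by
  intro a b
  simp only [B0, Matrix.of_apply, Matrix.neg_apply, Matrix.one_apply, apply_ite ψ,
    ψ_none, hψ10]
  split_ifs <;> norm_num

lemma hB1 : ∀ a b : Fin 4, (-J4) a b = ψ (B1 a b) := by
  intro a b
  fin_cases a <;> fin_cases b <;>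
    simp [J4, B1, hψ10, ψ_none, Matrix.vecHead, Matrix.vecTail]

lemma hB2 : ∀ a b : Fin 4, ((-Complex.I) • I4) a b = ψ (B2 a b) := by
  intro a b
  simp only [I4, B2, Matrix.of_apply, Matrix.smul_apply, Matrix.one_apply, smul_eq_mul,
    mul_ite, mul_one, mul_zero, apply_ite ψ, ψ_none, hψ15]

lemma hB3 : ∀ a b : Fin 4, (Complex.I • I4) a b = ψ (B3 a b) := by
  intro a b
  simp only [I4, B3, Matrix.of_apply, Matrix.smul_apply, Matrix.one_apply, smul_eq_mul,
    mul_ite, mul_one, mul_zero, apply_ite ψ, ψ_none, hψ5]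

lemma hB4 : ∀ a b : Fin 4, (Complex.I • L4) a b = ψ (B4 a b) := by
  intro a b
  fin_cases a <;> fin_cases b <;>
    simp [L4, B4, hψ5, ψ_none, Matrix.vecHead, Matrix.vecTail]

lemma hB5 : ∀ a b : Fin 4, ((-Complex.I) • K4) a b = ψ (B5 a b) := by
  intro a b
  fin_cases a <;> fin_cases b <;>
    simp [K4, B5, hψ15, ψ_none, Matrix.vecHead, Matrix.vecTail]

lemma hblk : ∀ (r c : ℕ) (a b : Fin 4), dblock r c a b = ψ (dblockM r c a b) := by
  intro r c a b
  simp only [dblock, dblockM, ite_apply, apply_ite ψ]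
  split_ifs <;>
    first
      | exact hB0 a b
      | exact hB1 a b
      | exact hB2 a b
      | exact hB3 a b
      | exact hB4 a b
      | exact hB5 a b
      | rfl
      | exact (hB5 a b).trans (congrArg (fun M : Matrix (Fin 4) (Fin 4) MM => ψ (M a b))
          (if_pos ‹r = 5 ∧ c = 4›)).symm
      | exact (congrArg (fun M : Matrix (Fin 4) (Fin 4) MM => ψ (M a b))
          (if_neg (t := B5) (e := fun _ _ => none) ‹¬(r = 5 ∧ c = 4)›)).symm

lemma hd : d = DM.map ψ := by
  ext i j
  rw [Matrix.map_apply]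
  simp only [d, DM, Matrix.of_apply, apply_ite ψ]
  split_ifs <;>
    first
      | exact hψ0.symm
      | exact hψ10.symm
      | rfl
      | exact hblk _ _ _ _

lemma hv1 : (![1,1,1, z,z^2,z^3,z^4, 1,1,1,1, z^3,z,z^4,z^2, z^3,z,z^4,z^2, z,z^2,z^3,z^4, z^2,z^4,z,z^3] : Fin 27 → ℂ) = fun i => ψ (v1M i) := by
  funext i
  fin_cases i <;>
    first
      | exact hψ0.symm
      | exact hψ4.symm
      | exact hψ8.symm
      | exact hψ12.symm
      | exact hψ16.symm

lemma hv2 : (![1,1,1, z^4,z^3,z^2,z, z^4,z^3,z^2,z, z^3,z,z^4,z^2, z,z^2,z^3,z^4, z^3,z,z^4,z^2, 1,1,1,1] : Fin 27 → ℂ) = fun i => ψ (v2M i) := by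
  funext i
  fin_cases i <;>
    first
      | exact hψ0.symm
      | exact hψ4.symm
      | exact hψ8.symm
      | exact hψ12.symm
      | exact hψ16.symm

lemma hf1 : f1 = Matrix.diagonal fun i => ψ (v1M i) := by
  unfold f1
  exact congrArg Matrix.diagonal hv1

lemma hf2 : f2 = Matrix.diagonal fun i => ψ (v2M i) := by
  unfold f2
  exact congrArg Matrix.diagonal hv2

lemma key1 : ∀ i j : Fin 27, mmul (v1M i) (DM i j) = mmul (DM i j) (v1M j) := by decide

lemma key2 : ∀ i j : Fin 27, mmul (v2M i) (DM i j) = mmul (DM i j) (wM j) := by decide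

lemma keyrow : ∀ i k : Fin 27, k ≠ κf i → DM i k = none := by
  have h : ∀ i k : Fin 27, k = κf i ∨ (DM i k).isNone = true := by decide
  intro i k hk
  exact Option.isNone_iff_eq_none.mp ((h i k).resolve_left hk)

lemma keyinv : ∀ i j : Fin 27,
    mmul (DM i (κf i)) (DM (κf i) j) = if i = j then some 0 else none := by decide

lemma keyw : ∀ j : Fin 27,
    mmul (mmul (mmul (v1M j) (v1M j)) (v1M j))
      (mmul (mmul (mmul (v2M j) (v2M j)) (v2M j)) (v2M j)) = wM j := by decide

lemma hg : f1 ^ 3 * f2 ^ 4 = Matrix.diagonal fun j => ψ (wM j) := by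
  rw [hf1, hf2, Matrix.diagonal_pow, Matrix.diagonal_pow, Matrix.diagonal_mul_diagonal]
  refine congrArg Matrix.diagonal (funext fun j => ?_)
  show (ψ (v1M j)) ^ 3 * (ψ (v2M j)) ^ 4 = ψ (wM j)
  rw [← keyw j, ψ_mmul, ψ_mmul, ψ_mmul, ψ_mmul, ψ_mmul, ψ_mmul]
  ring

lemma hcom1 : f1 * d = d * f1 := by
  rw [hf1, hd]
  ext i j
  rw [Matrix.diagonal_mul, Matrix.mul_diagonal, Matrix.map_apply, ← ψ_mmul, ← ψ_mmul,
    key1 i j]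

lemma hcom2 : f2 * d = d * Matrix.diagonal fun j => ψ (wM j) := by
  rw [hf2, hd]
  ext i j
  rw [Matrix.diagonal_mul, Matrix.mul_diagonal, Matrix.map_apply, ← ψ_mmul, ← ψ_mmul,
    key2 i j]

lemma hdd : d * d = 1 := by
  rw [hd]
  ext i j
  rw [Matrix.mul_apply]
  have h1 : ∀ k ∈ Finset.univ, k ≠ κf i →
      (DM.map ψ) i k * (DM.map ψ) k j = 0 := by
    intro k _ hk
    rw [Matrix.map_apply, keyrow i k hk, ψ_none, zero_mul]
  rw [Finset.sum_eq_single (κf i) h1 (fun h => absurd (Finset.mem_univ _) h),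
    Matrix.map_apply, Matrix.map_apply, ← ψ_mmul, keyinv i j, apply_ite ψ, hψ0, ψ_none,
    Matrix.one_apply]

theorem d_normalizes :
    (∃ a b : ℕ, d⁻¹ * f1 * d = f1 ^ a * f2 ^ b) ∧
    (∃ a b : ℕ, d⁻¹ * f2 * d = f1 ^ a * f2 ^ b) := by
  have hinv : d⁻¹ = d := Matrix.inv_eq_left_inv hdd
  constructor
  · refine ⟨1, 0, ?_⟩
    rw [hinv, pow_one, pow_zero, mul_one, mul_assoc, hcom1, ← mul_assoc, hdd, one_mul]
  · refine ⟨3, 4, ?_⟩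
    rw [hinv, hg, mul_assoc, hcom2, ← mul_assoc, hdd, one_mul]
end
end

section
/- The matrix ac conjugates the pair (f₁, f₂): (ac)⁻¹ f₁ (ac) and (ac)⁻¹ f₂ (ac) lie in the group generated by f₁ and f₂, so ac normalizes the elementary abelian group ⟨f₁,f₂⟩ of order 25. -/
noncomputable section
open Matrix

lemma z5 : z ^ 5 = 1 := by
  have h := Complex.exp_nat_mul (2 * Real.pi * Complex.I / 5) 5
  rw [z, ← h, show ((5:ℕ):ℂ) * (2 * Real.pi * Complex.I / 5) = 2 * Real.pi * Complex.I by
    push_cast; ring, Complex.exp_two_pi_mul_I]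
lemma z6 : z ^ 6 = z := by rw [show (6:ℕ) = 5+1 by rfl, pow_add, z5, one_mul, pow_one]
lemma z7 : z ^ 7 = z^2 := by rw [show (7:ℕ) = 5+2 by rfl, pow_add, z5, one_mul]
lemma z8 : z ^ 8 = z^3 := by rw [show (8:ℕ) = 5+3 by rfl, pow_add, z5, one_mul]
lemma z9 : z ^ 9 = z^4 := by rw [show (9:ℕ) = 5+4 by rfl, pow_add, z5, one_mul]
lemma z10 : z ^ 10 = 1 := by rw [show (10:ℕ) = 5+5 by rfl, pow_add, z5, one_mul]
lemma z11 : z ^ 11 = z := by rw [show (11:ℕ) = 5+6 by rfl, pow_add, z5, one_mul, z6]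
lemma z12 : z ^ 12 = z^2 := by rw [show (12:ℕ) = 5+7 by rfl, pow_add, z5, one_mul, z7]

/-- The permutation underlying `ac`. -/
def σac : Equiv.Perm (Fin 27) :=
  ⟨![1,2,0,20,22,19,21,24,26,23,25,4,6,3,5,8,10,7,9,12,14,11,13,16,18,15,17],
   ![2,0,1,13,11,14,12,17,15,18,16,21,19,22,20,25,23,26,24,5,3,6,4,9,7,10,8],
   by decide, by decide⟩

set_option maxHeartbeats 4000000 in
lemma hac : ac = σac.permMatrix ℂ := by
  ext i j
  fin_cases i <;> fin_cases j <;>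
    simp (config := { decide := true }) [ac, K4, σac, Equiv.Perm.permMatrix,
      PEquiv.toMatrix_apply, Equiv.toPEquiv_apply, Fin.ext_iff, Fin.coe_ofNat_eq_mod,
      Matrix.vecHead, Matrix.vecTail, Function.comp]

lemma perm_mul_inv : (σac.permMatrix ℂ) * ((σac⁻¹).permMatrix ℂ) = 1 := by
  rw [Equiv.Perm.permMatrix, Equiv.Perm.permMatrix, ← PEquiv.toMatrix_trans,
    ← Equiv.toPEquiv_trans, show σac.trans σac⁻¹ = Equiv.refl _ from Equiv.self_trans_symm σac,
    Equiv.toPEquiv_refl, PEquiv.toMatrix_refl]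

lemma perm_inv_mul : ((σac⁻¹).permMatrix ℂ) * (σac.permMatrix ℂ) = 1 := by
  rw [Equiv.Perm.permMatrix, Equiv.Perm.permMatrix, ← PEquiv.toMatrix_trans,
    ← Equiv.toPEquiv_trans, show (σac⁻¹).trans σac = Equiv.refl _ from Equiv.symm_trans_self σac,
    Equiv.toPEquiv_refl, PEquiv.toMatrix_refl]

lemma acinv_mul : ac⁻¹ * ac = 1 := by
  have hinv : ac⁻¹ = (σac⁻¹).permMatrix ℂ :=
    Matrix.inv_eq_right_inv (by rw [hac]; exact perm_mul_inv)
  rw [hinv, hac]; exact perm_inv_mul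

set_option maxHeartbeats 0 in
lemma key1_s14 : f1 * ac = ac * f2 := by
  ext i j
  rw [f1, f2, Matrix.diagonal_mul, Matrix.mul_diagonal]
  fin_cases i <;> fin_cases j <;> norm_num [ac, K4, Fin.coe_ofNat_eq_mod]

set_option maxHeartbeats 0 in
lemma key2_s14 : f2 * ac = ac * (f1 * (f2 * f2)) := by
  ext i j
  rw [f1, f2, Matrix.diagonal_mul_diagonal, Matrix.diagonal_mul_diagonal,
    Matrix.diagonal_mul, Matrix.mul_diagonal]
  fin_cases i <;> fin_cases j <;>
    norm_num [ac, K4, Pi.mul_apply, Fin.coe_ofNat_eq_mod] <;>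
    (try ring_nf) <;> norm_num [z5, z6, z7, z8, z9, z10, z11, z12]

theorem ac_normalizes :
    (∃ a b : ℕ, ac⁻¹ * f1 * ac = f1 ^ a * f2 ^ b) ∧
    (∃ a b : ℕ, ac⁻¹ * f2 * ac = f1 ^ a * f2 ^ b) := by
  constructor
  · exact ⟨0, 1, by rw [mul_assoc, key1_s14, ← mul_assoc, acinv_mul, one_mul, pow_zero, pow_one, one_mul]⟩
  · exact ⟨1, 2, by rw [mul_assoc, key2_s14, ← mul_assoc, acinv_mul, one_mul, pow_one, pow_two]⟩
end
end
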